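/- (Corollary 3) Let u be a game graphical on a directed graph E. Then u can be decomposed as u = u_N + u_P + u_H, where: u_N is a non-strategic game graphical on E; u_P is a normalized potential game graphical on E^△; and u_H is a normalized harmonic game graphical on E^△. -/

import Mathlib

/-- A game `u` is *graphical* on the directed graph with edge relation `E`. -/
def Graphical {V : Type*} (A : V → Type*) (u : ∀ i : V, (∀ j, A j) → ℝ)
    (E : V → V → Prop) : Prop :=
  ∀ i : V, ∀ x y : ∀ j, A j, x i = y i → (∀ j, E i j → x j = y j) → u i x = u i y

/-- A game is *non-strategic* if each player's utility does not depend on her own action. -/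
def NonStrategic {V : Type*} (A : V → Type*) (u : ∀ i : V, (∀ j, A j) → ℝ) : Prop :=
  ∀ i : V, ∀ x y : ∀ j, A j, (∀ j, j ≠ i → x j = y j) → u i x = u i y

/-- A game is *normalized* if for every player `i` and profile `x`, the sum of her
utilities over all her possible actions (others' actions fixed) vanishes. -/
def Normalized {V : Type*} [DecidableEq V] (A : V → Type*) [∀ i, Fintype (A i)]
    (u : ∀ i : V, (∀ j, A j) → ℝ) : Prop :=
  ∀ i : V, ∀ x : ∀ j, A j, ∑ a : A i, u i (Function.update x i a) = 0

/-- `φ` is an (exact) *potential* for the game `u`. -/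
def IsPotential {V : Type*} (A : V → Type*) (u : ∀ i : V, (∀ j, A j) → ℝ)
    (φ : (∀ j, A j) → ℝ) : Prop :=
  ∀ i : V, ∀ x y : ∀ j, A j, (∀ j, j ≠ i → x j = y j) → u i x - u i y = φ x - φ y

/-- A game is *harmonic* if `Σ_i Σ_{a ∈ A_i} (u_i(x) − u_i(a, x_{-i})) = 0` for all `x`. -/
def Harmonic {V : Type*} [Fintype V] [DecidableEq V] (A : V → Type*)
    [∀ i, Fintype (A i)] (u : ∀ i : V, (∀ j, A j) → ℝ) : Prop :=
  ∀ x : ∀ j, A j, ∑ i : V, ∑ a : A i, (u i x - u i (Function.update x i a)) = 0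

/-- The graph `E^△`: it contains `(j,l)` whenever `(j,l) ∈ E` or `(l,j) ∈ E`, together
with all pairs of distinct players that are out-neighbours of a common node in `E`. -/
def triangleGraph {V : Type*} (E : V → V → Prop) : V → V → Prop :=
  fun j l => E j l ∨ E l j ∨ (j ≠ l ∧ ∃ i, E i j ∧ E i l)


open Finset Function

set_option linter.unusedSectionVars false
set_option maxHeartbeats 1000000

namespace GameDecomp

variable {V : Type*} [Fintype V] [DecidableEq V]
variable {A : V → Type*} [∀ i, Fintype (A i)] [∀ i, Nonempty (A i)]

noncomputable def Tm (A : V → Type*) [∀ i, Fintype (A i)] (i : V) :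
    Module.End ℝ ((∀ j, A j) → ℝ) where
  toFun f := fun x => (Fintype.card (A i) : ℝ)⁻¹ * ∑ a : A i, f (Function.update x i a)
  map_add' f g := by
    funext x
    simp only [Pi.add_apply, Finset.sum_add_distrib]
    ring
  map_smul' c f := by
    funext x
    simp only [Pi.smul_apply, smul_eq_mul, ← Finset.mul_sum, RingHom.id_apply]
    ring

omit [∀ i, Nonempty (A i)] in
lemma Tm_apply (i : V) (f : (∀ j, A j) → ℝ) (x : ∀ j, A j) :
    Tm A i f x = (Fintype.card (A i) : ℝ)⁻¹ * ∑ a : A i, f (Function.update x i a) := rfl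

lemma card_ne (i : V) : (Fintype.card (A i) : ℝ) ≠ 0 := by
  exact_mod_cast Fintype.card_ne_zero

omit [∀ i, Nonempty (A i)] in
lemma Tm_update (i : V) (f : (∀ j, A j) → ℝ) (x : ∀ j, A j) (b : A i) :
    Tm A i f (Function.update x i b) = Tm A i f x := by
  simp [Tm_apply, Function.update_idem]

lemma Tm_const_dep (i : V) (f : (∀ j, A j) → ℝ) (h : ∀ x b, f (Function.update x i b) = f x) :
    Tm A i f = f := by
  funext x
  simp [Tm_apply, h, Finset.sum_const, card_univ, mul_comm, card_ne i]

omit [∀ i, Nonempty (A i)] in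
lemma dep_of_Tm_eq {i : V} {f : (∀ j, A j) → ℝ} (h : Tm A i f = f) (x : ∀ j, A j) (b : A i) :
    f (Function.update x i b) = f x := by
  conv_lhs => rw [← h]
  rw [Tm_update, h]

lemma Tm_idem (i : V) : Tm A i * Tm A i = Tm A i := by
  apply LinearMap.ext; intro f
  apply Tm_const_dep
  intro x b
  exact Tm_update i f x b

omit [∀ i, Nonempty (A i)] in
lemma Tm_comm (i j : V) : Commute (Tm A i) (Tm A j) := by
  rcases eq_or_ne i j with rfl | hij
  · exact Commute.refl _
  · show _ = _
    apply LinearMap.ext; intro f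
    funext x
    simp only [Module.End.mul_apply, Tm_apply, Finset.mul_sum]
    rw [Finset.sum_comm]
    congr 1
    ext a
    congr 1
    ext b
    rw [Function.update_comm hij]
    ring

omit [∀ i, Nonempty (A i)] in
lemma Tm_comm_apply (l i : V) (f : (∀ j, A j) → ℝ) :
    Tm A l (Tm A i f) = Tm A i (Tm A l f) := by
  have h := (Tm_comm (A := A) l i).eq
  calc Tm A l (Tm A i f) = (Tm A l * Tm A i) f := rfl
    _ = (Tm A i * Tm A l) f := by rw [h]
    _ = Tm A i (Tm A l f) := rfl

lemma Tm_Tm (i : V) (f : (∀ j, A j) → ℝ) : Tm A i (Tm A i f) = Tm A i f := by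
  calc Tm A i (Tm A i f) = (Tm A i * Tm A i) f := rfl
    _ = Tm A i f := by rw [Tm_idem]

noncomputable def fam (A : V → Type*) [∀ i, Fintype (A i)] (S : Finset V) (j : V) :
    Module.End ℝ ((∀ j, A j) → ℝ) :=
  if j ∈ S then 1 - Tm A j else Tm A j

omit [∀ i, Nonempty (A i)] in
lemma fam_commute (S S' : Finset V) (j k : V) : Commute (fam A S j) (fam A S' k) := by
  have h := Tm_comm (A := A) j k
  unfold fam
  split <;> split
  · exact (Commute.one_right _).sub_right ((Commute.one_left _).sub_left h)
  · exact (Commute.one_left _).sub_left h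
  · exact (Commute.one_right _).sub_right h
  · exact h

omit [∀ i, Nonempty (A i)] in
lemma fam_pairwise (s : Finset V) (S : Finset V) :
    (↑s : Set V).Pairwise fun a b => Commute (fam A S a) (fam A S b) :=
  fun a _ b _ _ => fam_commute S S a b

noncomputable def Pgen (A : V → Type*) [∀ i, Fintype (A i)] (s : Finset V) (S : Finset V) :
    Module.End ℝ ((∀ j, A j) → ℝ) :=
  s.noncommProd (fam A S) (fam_pairwise s S)

noncomputable def Pm (A : V → Type*) [∀ i, Fintype (A i)] [Fintype V] (S : Finset V) :
    Module.End ℝ ((∀ j, A j) → ℝ) :=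
  Pgen A Finset.univ S

omit [∀ i, Nonempty (A i)] in
lemma Pgen_pull (s S : Finset V) (a : V) (ha : a ∈ s) :
    Pgen A s S = fam A S a * Pgen A (s.erase a) S := by
  unfold Pgen
  rw [← Finset.noncommProd_insert_of_notMem (s.erase a) a (fam A S)
    (fam_pairwise _ S) (Finset.notMem_erase a s)]
  congr 1
  exact (Finset.insert_erase ha).symm

omit [∀ i, Nonempty (A i)] in
lemma fam_commute_Pgen (s S : Finset V) (a : V) : Commute (fam A S a) (Pgen A s S) :=
  Finset.noncommProd_commute _ _ _ _ fun k _ => fam_commute S S a k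

omit [∀ i, Nonempty (A i)] in
lemma Pgen_pull' (s S : Finset V) (a : V) (ha : a ∈ s) :
    Pgen A s S = Pgen A (s.erase a) S * fam A S a := by
  rw [Pgen_pull s S a ha, (fam_commute_Pgen _ S a).eq]

lemma Tm_mul_Pm_of_mem {S : Finset V} {i : V} (hi : i ∈ S) : Tm A i * Pm A S = 0 := by
  rw [Pm, Pgen_pull Finset.univ S i (Finset.mem_univ i), ← mul_assoc]
  have : Tm A i * fam A S i = 0 := by
    rw [fam, if_pos hi, mul_sub, mul_one, Tm_idem, sub_self]
  rw [this, zero_mul]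

lemma Tm_mul_Pm_of_not_mem {S : Finset V} {i : V} (hi : i ∉ S) : Tm A i * Pm A S = Pm A S := by
  rw [Pm, Pgen_pull Finset.univ S i (Finset.mem_univ i), ← mul_assoc]
  have : Tm A i * fam A S i = fam A S i := by
    rw [fam, if_neg hi, Tm_idem]
  rw [this, ← Pgen_pull Finset.univ S i (Finset.mem_univ i)]

lemma Pm_eq_zero_of_fixed {S : Finset V} {i : V} (hi : i ∈ S) {f : (∀ j, A j) → ℝ}
    (hf : Tm A i f = f) : Pm A S f = 0 := by
  rw [Pm, Pgen_pull' Finset.univ S i (Finset.mem_univ i)]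
  have : fam A S i f = 0 := by
    rw [fam, if_pos hi]; simp [hf]
  rw [Module.End.mul_apply, this, map_zero]

lemma Pm_eq_zero_of_killed {S : Finset V} {i : V} (hi : i ∉ S) {f : (∀ j, A j) → ℝ}
    (hf : Tm A i f = 0) : Pm A S f = 0 := by
  rw [Pm, Pgen_pull' Finset.univ S i (Finset.mem_univ i)]
  have : fam A S i f = 0 := by
    rw [fam, if_neg hi]; simp [hf]
  rw [Module.End.mul_apply, this, map_zero]

lemma sum_Pgen (s : Finset V) : ∑ S ∈ s.powerset, Pgen A s S = 1 := by
  induction s using Finset.induction with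
  | empty => simp [Pgen]
  | @insert a s ha ih =>
    rw [Finset.powerset_insert, Finset.sum_union, Finset.sum_image]
    · have h1 : ∀ S ∈ s.powerset, Pgen A (insert a s) S = Tm A a * Pgen A s S := by
        intro S hS
        rw [Finset.mem_powerset] at hS
        have haS : a ∉ S := fun h => ha (hS h)
        rw [Pgen, Finset.noncommProd_insert_of_notMem s a (fam A S) _ ha]
        congr 1
        rw [fam, if_neg haS]
      have h2 : ∀ S ∈ s.powerset, Pgen A (insert a s) (insert a S) =
          (1 - Tm A a) * Pgen A s S := by
        intro S hS
        rw [Finset.mem_powerset] at hS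
        rw [Pgen, Finset.noncommProd_insert_of_notMem s a (fam A (insert a S)) _ ha]
        congr 1
        · rw [fam, if_pos (Finset.mem_insert_self a S)]
        · rw [Pgen]
          apply Finset.noncommProd_congr rfl
          intro j hj
          have : j ≠ a := fun h => ha (h ▸ hj)
          simp [fam, Finset.mem_insert, this]
      rw [Finset.sum_congr rfl h1, Finset.sum_congr rfl h2, ← Finset.sum_add_distrib]
      have h3 : ∀ S ∈ s.powerset, Tm A a * Pgen A s S + (1 - Tm A a) * Pgen A s S
          = Pgen A s S := by
        intro S _
        rw [← add_mul]
        simp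
      rw [Finset.sum_congr rfl h3, ih]
    · intro S hS S' hS' h
      rw [Finset.mem_coe, Finset.mem_powerset] at hS hS'
      have haS : a ∉ S := fun h' => ha (hS h')
      have haS' : a ∉ S' := fun h' => ha (hS' h')
      rw [← Finset.erase_insert haS, ← Finset.erase_insert haS', h]
    · rw [Finset.disjoint_left]
      intro S hS hS2
      rw [Finset.mem_powerset] at hS
      rw [Finset.mem_image] at hS2
      obtain ⟨S', _, rfl⟩ := hS2
      exact ha (hS (Finset.mem_insert_self a S'))

/-- If `f` is invariant under all `Tm l` with `l ∉ W`, then `f` depends only on `W`. -/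
lemma eq_of_invariant {f : (∀ j, A j) → ℝ} {W : Set V}
    (h : ∀ l, l ∉ W → Tm A l f = f) (x y : ∀ j, A j) (hxy : ∀ j ∈ W, x j = y j) :
    f x = f y := by
  suffices H : ∀ s : Finset V, ∀ x y : ∀ j, A j, (∀ j ∈ W, x j = y j) →
      (∀ j, x j ≠ y j → j ∈ s) → f x = f y by
    exact H Finset.univ x y hxy (fun j _ => Finset.mem_univ j)
  intro s
  induction s using Finset.induction with
  | empty =>
    intro x y h1 h2
    have : x = y := funext fun j => by
      by_contra hj
      exact absurd (h2 j hj) (Finset.notMem_empty j)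
    rw [this]
  | @insert a s ha ih =>
    intro x y h1 h2
    have hx' : f (Function.update x a (y a)) = f x := by
      by_cases haW : a ∈ W
      · rw [← h1 a haW, Function.update_eq_self]
      · exact dep_of_Tm_eq (h a haW) x (y a)
    rw [← hx']
    apply ih
    · intro j hj
      rcases eq_or_ne j a with rfl | hja
      · simp
      · rw [Function.update_of_ne hja]; exact h1 j hj
    · intro j hj
      have hja : j ≠ a := by
        rintro rfl
        simp at hj
      rw [Function.update_of_ne hja] at hj
      rcases Finset.mem_insert.mp (h2 j hj) with h' | h'
      · exact absurd h' hja
      · exact h'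


section Decomp

variable (u : ∀ i : V, (∀ j, A j) → ℝ)

noncomputable def uhat (u : ∀ i : V, (∀ j, A j) → ℝ) (i : V) : (∀ j, A j) → ℝ :=
  u i - Tm A i (u i)

noncomputable def gf (u : ∀ i : V, (∀ j, A j) → ℝ) : (∀ j, A j) → ℝ :=
  ∑ i : V, (Fintype.card (A i) : ℝ) • uhat u i

noncomputable def mS (A : V → Type*) [∀ i, Fintype (A i)] (S : Finset V) : ℝ :=
  ∑ i ∈ S, (Fintype.card (A i) : ℝ)

noncomputable def phi (u : ∀ i : V, (∀ j, A j) → ℝ) : (∀ j, A j) → ℝ :=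
  ∑ S ∈ Finset.univ.powerset.erase (∅ : Finset V), (mS A S)⁻¹ • Pm A S (gf u)

noncomputable def uPf (u : ∀ i : V, (∀ j, A j) → ℝ) (i : V) : (∀ j, A j) → ℝ :=
  phi u - Tm A i (phi u)

lemma Tm_uhat_self (i : V) : Tm A i (uhat u i) = 0 := by
  unfold uhat
  rw [map_sub, Tm_Tm, sub_self]

lemma Tm_graph {E : V → V → Prop} (hg : Graphical A u E) {i l : V} (hli : l ≠ i)
    (hEl : ¬ E i l) : Tm A l (u i) = u i := by
  apply Tm_const_dep
  intro x b
  apply hg i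
  · exact Function.update_of_ne (Ne.symm hli) b x
  · intro j hj
    have hjl : j ≠ l := fun h => hEl (h ▸ hj)
    exact Function.update_of_ne hjl b x

lemma Tm_uhat_graph {E : V → V → Prop} (hg : Graphical A u E) {i l : V} (hli : l ≠ i)
    (hEl : ¬ E i l) : Tm A l (uhat u i) = uhat u i := by
  unfold uhat
  rw [map_sub, Tm_graph u hg hli hEl, Tm_comm_apply, Tm_graph u hg hli hEl]

lemma Pm_gf_empty : Pm A (∅ : Finset V) (gf u) = 0 := by
  unfold gf
  rw [map_sum]
  apply Finset.sum_eq_zero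
  intro i _
  rw [map_smul, Pm_eq_zero_of_killed (Finset.notMem_empty i) (Tm_uhat_self u i), smul_zero]

lemma sum_Pm_gf : ∑ S ∈ Finset.univ.powerset, Pm A S (gf u) = gf u := by
  have h := sum_Pgen (A := A) (Finset.univ : Finset V)
  calc ∑ S ∈ Finset.univ.powerset, Pm A S (gf u)
      = (∑ S ∈ Finset.univ.powerset, Pm A S) (gf u) := (LinearMap.sum_apply _ _ _).symm
    _ = gf u := by
        simp only [Pm]
        rw [h]
        rfl

lemma mS_ne {S : Finset V} (hS : S ∈ Finset.univ.powerset.erase (∅ : Finset V)) :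
    mS A S ≠ 0 := by
  have hne : S ≠ ∅ := (Finset.mem_erase.mp hS).1
  have : 0 < mS A S := by
    apply Finset.sum_pos
    · intro i _
      exact_mod_cast Fintype.card_pos
    · exact Finset.nonempty_iff_ne_empty.mpr hne
  exact ne_of_gt this

lemma uPf_apply_End (i : V) : uPf u i = (1 - Tm A i) (phi u) := rfl

lemma uPf_expand (j : V) : uPf u j =
    ∑ S ∈ Finset.univ.powerset.erase (∅ : Finset V), ∑ i : V,
      ((mS A S)⁻¹ * (Fintype.card (A i) : ℝ)) • ((1 - Tm A j) (Pm A S (uhat u i))) := by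
  rw [uPf_apply_End, phi, map_sum]
  apply Finset.sum_congr rfl
  intro S _
  rw [map_smul]
  have hPg : Pm A S (gf u) = ∑ i : V, (Fintype.card (A i) : ℝ) • Pm A S (uhat u i) := by
    simp only [gf, map_sum, map_smul]
  rw [hPg, map_sum, Finset.smul_sum]
  apply Finset.sum_congr rfl
  intro i _
  rw [map_smul, smul_smul]

lemma Tm_uPf_self (j : V) : Tm A j (uPf u j) = 0 := by
  show Tm A j (phi u - Tm A j (phi u)) = 0
  rw [map_sub, Tm_Tm, sub_self]

lemma Tm_uPf {E : V → V → Prop} (hg : Graphical A u E) {j l : V} (hlj : l ≠ j)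
    (htri : ¬ triangleGraph E j l) : Tm A l (uPf u j) = uPf u j := by
  rw [uPf_expand, map_sum]
  apply Finset.sum_congr rfl
  intro S _
  rw [map_sum]
  apply Finset.sum_congr rfl
  intro i _
  rw [map_smul]
  congr 1
  by_cases hlS : l ∈ S
  · by_cases hcl : l = i ∨ E i l
    · by_cases hjS : j ∈ S
      · by_cases hcj : j = i ∨ E i j
        · exfalso
          apply htri
          rcases hcj with rfl | hEj
          · rcases hcl with rfl | hEl
            · exact absurd rfl hlj
            · exact Or.inl hEl
          · rcases hcl with rfl | hEl
            · exact Or.inr (Or.inl hEj)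
            · exact Or.inr (Or.inr ⟨Ne.symm hlj, i, hEj, hEl⟩)
        · push_neg at hcj
          rw [Pm_eq_zero_of_fixed hjS (Tm_uhat_graph u hg hcj.1 hcj.2), map_zero, map_zero]
      · have h0 : (1 - Tm A j) (Pm A S (uhat u i)) = 0 := by
          calc (1 - Tm A j) (Pm A S (uhat u i))
              = Pm A S (uhat u i) - (Tm A j * Pm A S) (uhat u i) := rfl
            _ = 0 := by rw [Tm_mul_Pm_of_not_mem hjS, sub_self]
        rw [h0, map_zero]
    · push_neg at hcl
      rw [Pm_eq_zero_of_fixed hlS (Tm_uhat_graph u hg hcl.1 hcl.2), map_zero, map_zero]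
  · have hcomm : Tm A l * (1 - Tm A j) = (1 - Tm A j) * Tm A l :=
      ((Commute.one_right (Tm A l)).sub_right (Tm_comm l j)).eq
    calc Tm A l ((1 - Tm A j) (Pm A S (uhat u i)))
        = (Tm A l * (1 - Tm A j)) (Pm A S (uhat u i)) := rfl
      _ = ((1 - Tm A j) * Tm A l) (Pm A S (uhat u i)) := by rw [hcomm]
      _ = (1 - Tm A j) ((Tm A l * Pm A S) (uhat u i)) := rfl
      _ = (1 - Tm A j) (Pm A S (uhat u i)) := by rw [Tm_mul_Pm_of_not_mem hlS]

lemma sum_cuH : ∑ i : V, (Fintype.card (A i) : ℝ) • (uhat u i - uPf u i) = 0 := by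
  have hX : ∑ i : V, (Fintype.card (A i) : ℝ) • uPf u i = gf u := by
    have h1 : ∀ i : V, (Fintype.card (A i) : ℝ) • uPf u i
        = ∑ S ∈ Finset.univ.powerset.erase (∅ : Finset V),
            ((Fintype.card (A i) : ℝ) * (mS A S)⁻¹) • ((1 - Tm A i) (Pm A S (gf u))) := by
      intro i
      rw [uPf_apply_End, phi, map_sum, Finset.smul_sum]
      apply Finset.sum_congr rfl
      intro S _
      rw [map_smul, smul_smul]
    rw [Finset.sum_congr rfl (fun i _ => h1 i), Finset.sum_comm]
    have h2 : ∀ S ∈ Finset.univ.powerset.erase (∅ : Finset V),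
        (∑ i : V, ((Fintype.card (A i) : ℝ) * (mS A S)⁻¹) • ((1 - Tm A i) (Pm A S (gf u))))
          = Pm A S (gf u) := by
      intro S hS
      have hterm : ∀ i : V,
          ((Fintype.card (A i) : ℝ) * (mS A S)⁻¹) • ((1 - Tm A i) (Pm A S (gf u)))
          = if i ∈ S then ((Fintype.card (A i) : ℝ) * (mS A S)⁻¹) • Pm A S (gf u) else 0 := by
        intro i
        by_cases hiS : i ∈ S
        · rw [if_pos hiS]
          congr 1
          calc (1 - Tm A i) (Pm A S (gf u))
              = Pm A S (gf u) - (Tm A i * Pm A S) (gf u) := rfl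
            _ = Pm A S (gf u) := by rw [Tm_mul_Pm_of_mem hiS]; simp
        · rw [if_neg hiS]
          have h0 : (1 - Tm A i) (Pm A S (gf u)) = 0 := by
            calc (1 - Tm A i) (Pm A S (gf u))
                = Pm A S (gf u) - (Tm A i * Pm A S) (gf u) := rfl
              _ = 0 := by rw [Tm_mul_Pm_of_not_mem hiS, sub_self]
          rw [h0, smul_zero]
      rw [Finset.sum_congr rfl (fun i _ => hterm i), Finset.sum_ite_mem, Finset.univ_inter,
        ← Finset.sum_smul, ← Finset.sum_mul]
      have hmm : (∑ i ∈ S, (Fintype.card (A i) : ℝ)) = mS A S := rfl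
      rw [hmm, mul_inv_cancel₀ (mS_ne hS), one_smul]
    rw [Finset.sum_congr rfl h2]
    have h3 := Finset.sum_erase_add Finset.univ.powerset (fun S => Pm A S (gf u))
      (Finset.mem_powerset.mpr (Finset.empty_subset _))
    simp only [sum_Pm_gf u, Pm_gf_empty u, add_zero] at h3
    exact h3
  have h4 : ∀ i : V, (Fintype.card (A i) : ℝ) • (uhat u i - uPf u i)
      = (Fintype.card (A i) : ℝ) • uhat u i - (Fintype.card (A i) : ℝ) • uPf u i :=
    fun i => smul_sub _ _ _
  rw [Finset.sum_congr rfl (fun i _ => h4 i), Finset.sum_sub_distrib, hX]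
  have h5 : ∑ i : V, (Fintype.card (A i) : ℝ) • uhat u i = gf u := rfl
  rw [h5, sub_self]

lemma sum_update_eq_zero {i : V} {f : (∀ j, A j) → ℝ} (h : Tm A i f = 0) (x : ∀ j, A j) :
    ∑ a : A i, f (Function.update x i a) = 0 := by
  have h0 : Tm A i f x = 0 := by rw [h]; rfl
  rw [Tm_apply] at h0
  rcases mul_eq_zero.mp h0 with h' | h'
  · exact absurd h' (inv_ne_zero (card_ne i))
  · exact h'

end Decomp

end GameDecomp

open GameDecomp

/-- Corollary 3: every game graphical on `E` decomposes as `u = u_N + u_P + u_H` with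
`u_N` non-strategic and graphical on `E`, `u_P` a normalized potential game graphical
on `E^△`, and `u_H` a normalized harmonic game graphical on `E^△`. -/
theorem decomposition_of_graphical {V : Type*} [Fintype V] [DecidableEq V]
    {A : V → Type*} [∀ i, Fintype (A i)] [∀ i, Nonempty (A i)]
    (u : ∀ i : V, (∀ j, A j) → ℝ) (E : V → V → Prop) (hirr : ∀ i, ¬ E i i)
    (hg : Graphical A u E) :
    ∃ uN uP uH : ∀ i : V, (∀ j, A j) → ℝ,
      (∀ i x, u i x = uN i x + uP i x + uH i x) ∧
      NonStrategic A uN ∧ Graphical A uN E ∧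
      Normalized A uP ∧ (∃ φ, IsPotential A uP φ) ∧ Graphical A uP (triangleGraph E) ∧
      Normalized A uH ∧ Harmonic A uH ∧ Graphical A uH (triangleGraph E) := by
  classical
  refine ⟨fun i => Tm A i (u i), uPf u, fun i => uhat u i - uPf u i,
    ?_, ?_, ?_, ?_, ⟨phi u, ?_⟩, ?_, ?_, ?_, ?_⟩
  · -- decomposition
    intro i x
    simp only [GameDecomp.uhat, Pi.sub_apply]
    ring
  · -- NonStrategic uN
    intro i x y hxy
    have hy : y = Function.update x i (y i) := by
      funext j
      rcases eq_or_ne j i with rfl | hj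
      · simp
      · rw [Function.update_of_ne hj]
        exact (hxy j hj).symm
    conv_rhs => rw [hy]
    exact (Tm_update i (u i) x (y i)).symm
  · -- Graphical uN E
    intro i x y hxi hxN
    apply eq_of_invariant (W := {l | l = i ∨ E i l}) ?_ x y ?_
    · intro l hl
      simp only [Set.mem_setOf_eq, not_or] at hl
      rw [Tm_comm_apply, Tm_graph u hg hl.1 hl.2]
    · intro j hj
      simp only [Set.mem_setOf_eq] at hj
      rcases hj with rfl | hj
      · exact hxi
      · exact hxN j hj
  · -- Normalized uP
    intro i x
    exact sum_update_eq_zero (Tm_uPf_self u i) x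
  · -- IsPotential uP (phi u)
    intro i x y hxy
    have hy : y = Function.update x i (y i) := by
      funext j
      rcases eq_or_ne j i with rfl | hj
      · simp
      · rw [Function.update_of_ne hj]
        exact (hxy j hj).symm
    have hT : Tm A i (phi u) y = Tm A i (phi u) x := by
      conv_lhs => rw [hy]
      exact Tm_update i _ x (y i)
    simp only [GameDecomp.uPf, Pi.sub_apply]
    rw [hT]
    ring
  · -- Graphical uP
    intro j x y hxj hxN
    apply eq_of_invariant (W := {l | l = j ∨ triangleGraph E j l}) ?_ x y ?_
    · intro l hl
      simp only [Set.mem_setOf_eq, not_or] at hl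
      exact Tm_uPf u hg hl.1 hl.2
    · intro k hk
      simp only [Set.mem_setOf_eq] at hk
      rcases hk with rfl | hk
      · exact hxj
      · exact hxN k hk
  · -- Normalized uH
    intro i x
    apply sum_update_eq_zero ?_ x
    rw [map_sub, Tm_uhat_self, Tm_uPf_self, sub_self]
  · -- Harmonic uH
    intro x
    have hT0 : ∀ i : V, Tm A i (uhat u i - uPf u i) = 0 := by
      intro i
      rw [map_sub, Tm_uhat_self, Tm_uPf_self, sub_self]
    have hin : ∀ i : V, (∑ a : A i, ((uhat u i - uPf u i) x
        - (uhat u i - uPf u i) (Function.update x i a)))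
        = (Fintype.card (A i) : ℝ) * (uhat u i - uPf u i) x := by
      intro i
      rw [Finset.sum_sub_distrib, sum_update_eq_zero (hT0 i) x, sub_zero,
        Finset.sum_const, Finset.card_univ, nsmul_eq_mul]
    rw [Finset.sum_congr rfl (fun i _ => hin i)]
    have hkey := congrFun (sum_cuH u) x
    rw [Finset.sum_apply] at hkey
    simpa [Pi.smul_apply, smul_eq_mul] using hkey
  · -- Graphical uH
    intro j x y hxj hxN
    apply eq_of_invariant (W := {l | l = j ∨ triangleGraph E j l}) ?_ x y ?_
    · intro l hl
      simp only [Set.mem_setOf_eq, not_or] at hl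
      rw [map_sub, Tm_uhat_graph u hg hl.1 (fun h => hl.2 (Or.inl h)),
        Tm_uPf u hg hl.1 hl.2]
    · intro k hk
      simp only [Set.mem_setOf_eq] at hk
      rcases hk with rfl | hk
      · exact hxj
      · exact hxN k hk
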